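/- In a finite probability space with variables (U, X, Z, A, Y), A binary, assume: Z ⟂ Y | (A, X, U); there is a nonnegative q with E[q(Z,A,X) | A,X,U] = p(U | 1−A, X)/p(U | A, X) a.s.; Y^(a) ⟂ A | (X,U); positivity; consistency. Then E[min_z E[Y | Z=z, X, A=a] | A=1−a] ≤ E[Y^(a) | A=1−a] ≤ E[max_z E[Y | Z=z, X, A=a] | A=1−a]. -/

import Mathlib

open Finset Real
open scoped Classical

/-- Probability of an event under a pmf `P` on a finite sample space. -/
noncomputable def pr {Ω : Type*} [Fintype Ω] (P : Ω → ℝ) (E : Ω → Prop) : ℝ :=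
  ∑ ω, if E ω then P ω else 0

/-- Expectation of `f` under `P`. -/
noncomputable def ex {Ω : Type*} [Fintype Ω] (P : Ω → ℝ) (f : Ω → ℝ) : ℝ :=
  ∑ ω, P ω * f ω

/-- Conditional expectation `E[f | E]`. -/
noncomputable def ce {Ω : Type*} [Fintype Ω] (P : Ω → ℝ) (f : Ω → ℝ) (E : Ω → Prop) : ℝ :=
  (∑ ω, if E ω then P ω * f ω else 0) / pr P E

/-- Conditional probability `P(E | F)`. -/
noncomputable def cpr {Ω : Type*} [Fintype Ω] (P : Ω → ℝ) (E F : Ω → Prop) : ℝ :=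
  pr P (fun ω => E ω ∧ F ω) / pr P F

namespace Proxy
variable {Ω : Type*} [Fintype Ω]

noncomputable def ns (P : Ω → ℝ) (f : Ω → ℝ) (E : Ω → Prop) : ℝ :=
  ∑ ω, if E ω then P ω * f ω else 0

lemma ce_def (P : Ω → ℝ) (f : Ω → ℝ) (E : Ω → Prop) : ce P f E = ns P f E / pr P E := rfl

lemma pr_congr (P : Ω → ℝ) {E F : Ω → Prop} (h : ∀ ω, E ω ↔ F ω) : pr P E = pr P F := by
  unfold pr; exact Finset.sum_congr rfl fun ω _ => by rw [if_congr (h ω) rfl rfl]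

lemma ns_congr (P : Ω → ℝ) (f : Ω → ℝ) {E F : Ω → Prop} (h : ∀ ω, E ω ↔ F ω) :
    ns P f E = ns P f F := by
  unfold ns; exact Finset.sum_congr rfl fun ω _ => by rw [if_congr (h ω) rfl rfl]

lemma ns_congr_fun (P : Ω → ℝ) {f g : Ω → ℝ} {E : Ω → Prop} (h : ∀ ω, E ω → f ω = g ω) :
    ns P f E = ns P g E := by
  unfold ns
  refine Finset.sum_congr rfl fun ω _ => ?_
  by_cases hE : E ω
  · simp [hE, h ω hE]
  · simp [hE]

lemma pr_nonneg (P : Ω → ℝ) (hP : ∀ ω, 0 ≤ P ω) (E : Ω → Prop) : 0 ≤ pr P E :=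
  Finset.sum_nonneg fun ω _ => by by_cases h : E ω <;> simp [h, hP ω]

lemma pr_mono (P : Ω → ℝ) (hP : ∀ ω, 0 ≤ P ω) {E F : Ω → Prop} (h : ∀ ω, E ω → F ω) :
    pr P E ≤ pr P F := by
  refine Finset.sum_le_sum fun ω _ => ?_
  by_cases hE : E ω
  · simp [hE, h ω hE]
  · by_cases hF : F ω <;> simp [hE, hF, hP ω]

lemma pr_partition {α : Type*} [Fintype α] (P : Ω → ℝ) (g : Ω → α) (E : Ω → Prop) :
    pr P E = ∑ v, pr P (fun ω => g ω = v ∧ E ω) := by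
  unfold pr
  rw [Finset.sum_comm]
  refine Finset.sum_congr rfl fun ω _ => ?_
  by_cases hE : E ω
  · simp only [hE, and_true, if_true]
    rw [Finset.sum_ite_eq Finset.univ (g ω) (fun _ => P ω)]
    simp
  · simp [hE]

lemma ns_partition {α : Type*} [Fintype α] (P : Ω → ℝ) (g : Ω → α) (f : Ω → ℝ) (E : Ω → Prop) :
    ns P f E = ∑ v, ns P f (fun ω => g ω = v ∧ E ω) := by
  unfold ns
  rw [Finset.sum_comm]
  refine Finset.sum_congr rfl fun ω _ => ?_
  by_cases hE : E ω
  · simp only [hE, and_true, if_true]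
    rw [Finset.sum_ite_eq Finset.univ (g ω) (fun _ => P ω * f ω)]
    simp
  · simp [hE]

lemma ns_value (P : Ω → ℝ) (f : Ω → ℝ) (E : Ω → Prop) :
    ns P f E = ∑ y ∈ Finset.image f Finset.univ, y * pr P (fun ω => f ω = y ∧ E ω) := by
  unfold ns pr
  simp_rw [Finset.mul_sum, mul_ite, mul_zero]
  rw [Finset.sum_comm]
  refine Finset.sum_congr rfl fun ω _ => ?_
  by_cases hE : E ω
  · simp only [hE, and_true]
    rw [Finset.sum_ite_eq (Finset.image f Finset.univ) (f ω) (fun y => y * P ω)]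
    simp [Finset.mem_image_of_mem f (Finset.mem_univ ω), mul_comm]
  · simp [hE]

lemma ns_const (P : Ω → ℝ) (c : ℝ) (E : Ω → Prop) : ns P (fun _ => c) E = c * pr P E := by
  unfold ns pr
  rw [Finset.mul_sum]
  refine Finset.sum_congr rfl fun ω _ => ?_
  by_cases hE : E ω <;> simp [hE, mul_comm]

lemma ns_smul (P : Ω → ℝ) (c : ℝ) (f : Ω → ℝ) (E : Ω → Prop) :
    ns P (fun ω => c * f ω) E = c * ns P f E := by
  unfold ns
  rw [Finset.mul_sum]
  refine Finset.sum_congr rfl fun ω _ => ?_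
  by_cases hE : E ω
  · simp only [hE, if_true]; ring
  · simp [hE]

lemma ns_mul_pr (P : Ω → ℝ) (f : Ω → ℝ) (E F : Ω → Prop)
    (h : ∀ y ∈ Finset.image f Finset.univ,
      pr P (fun ω => f ω = y ∧ E ω) * pr P F = pr P (fun ω => f ω = y ∧ F ω) * pr P E) :
    ns P f E * pr P F = ns P f F * pr P E := by
  rw [ns_value P f E, ns_value P f F, Finset.sum_mul, Finset.sum_mul]
  refine Finset.sum_congr rfl fun y hy => ?_
  rw [mul_assoc, mul_assoc, h y hy]

lemma ns_mul_pr' (P : Ω → ℝ) (f : Ω → ℝ) (G E : Ω → Prop)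
    (h : ∀ y ∈ Finset.image f Finset.univ,
      pr P (fun ω => G ω ∧ f ω = y ∧ E ω) * pr P E
        = pr P (fun ω => G ω ∧ E ω) * pr P (fun ω => f ω = y ∧ E ω)) :
    ns P f (fun ω => G ω ∧ E ω) * pr P E = pr P (fun ω => G ω ∧ E ω) * ns P f E := by
  rw [ns_value P f (fun ω => G ω ∧ E ω), ns_value P f E, Finset.sum_mul, Finset.mul_sum]
  refine Finset.sum_congr rfl fun y hy => ?_
  have e : pr P (fun ω => f ω = y ∧ G ω ∧ E ω) = pr P (fun ω => G ω ∧ f ω = y ∧ E ω) :=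
    pr_congr P fun ω => ⟨fun h => ⟨h.2.1, h.1, h.2.2⟩, fun h => ⟨h.2.1, h.1, h.2.2⟩⟩
  calc y * pr P (fun ω => f ω = y ∧ G ω ∧ E ω) * pr P E
      = y * (pr P (fun ω => G ω ∧ f ω = y ∧ E ω) * pr P E) := by rw [mul_assoc, e]
    _ = y * (pr P (fun ω => G ω ∧ E ω) * pr P (fun ω => f ω = y ∧ E ω)) := by rw [h y hy]
    _ = pr P (fun ω => G ω ∧ E ω) * (y * pr P (fun ω => f ω = y ∧ E ω)) := by ring

end Proxy

open Proxy

/-- Theorem 2: single treatment-confounding-proxy bounds: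
`E[min_z E[Y | z, X, A=a] | A=1−a] ≤ E[Y^(a) | A=1−a] ≤ E[max_z E[Y | z, X, A=a] | A=1−a]`. -/
theorem single_treatment_proxy_bounds {Ω U X Z : Type*} [Fintype Ω] [Fintype U] [Fintype X]
    [Fintype Z] [Nonempty Z]
    (P : Ω → ℝ) (hP : ∀ ω, 0 ≤ P ω) (hP1 : ∑ ω, P ω = 1)
    (Uv : Ω → U) (Xv : Ω → X) (Zv : Ω → Z) (Av : Ω → Bool) (Yv : Ω → ℝ)
    (a : Bool) (Ya : Ω → ℝ)
    -- Z ⟂ Y | (A, X, U)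
    (hZY : ∀ (z : Z) (y : ℝ) (a' : Bool) (x : X) (u : U),
      pr P (fun ω => Zv ω = z ∧ Yv ω = y ∧ Av ω = a' ∧ Xv ω = x ∧ Uv ω = u) *
          pr P (fun ω => Av ω = a' ∧ Xv ω = x ∧ Uv ω = u) =
        pr P (fun ω => Zv ω = z ∧ Av ω = a' ∧ Xv ω = x ∧ Uv ω = u) *
          pr P (fun ω => Yv ω = y ∧ Av ω = a' ∧ Xv ω = x ∧ Uv ω = u))
    -- treatment bridge function q
    (q : Z → Bool → X → ℝ) (hq : ∀ z a' x, 0 ≤ q z a' x)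
    (hbridgeq : ∀ (a' : Bool) (x : X) (u : U),
      ce P (fun ω => q (Zv ω) a' (Xv ω)) (fun ω => Av ω = a' ∧ Xv ω = x ∧ Uv ω = u) =
        cpr P (fun ω => Uv ω = u) (fun ω => Av ω = !a' ∧ Xv ω = x) /
          cpr P (fun ω => Uv ω = u) (fun ω => Av ω = a' ∧ Xv ω = x))
    -- Y^(a) ⟂ A | (X,U)
    (hYaA : ∀ (y : ℝ) (a' : Bool) (x : X) (u : U),
      pr P (fun ω => Ya ω = y ∧ Av ω = a' ∧ Xv ω = x ∧ Uv ω = u) *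
          pr P (fun ω => Xv ω = x ∧ Uv ω = u) =
        pr P (fun ω => Ya ω = y ∧ Xv ω = x ∧ Uv ω = u) *
          pr P (fun ω => Av ω = a' ∧ Xv ω = x ∧ Uv ω = u))
    -- positivity
    (hpos : ∀ (a' : Bool) (x : X) (u : U),
      0 < pr P fun ω => Av ω = a' ∧ Xv ω = x ∧ Uv ω = u)
    (hposZ : ∀ (z : Z) (a' : Bool) (x : X),
      0 < pr P fun ω => Zv ω = z ∧ Av ω = a' ∧ Xv ω = x)
    -- consistency
    (hcons : ∀ ω, Av ω = a → Yv ω = Ya ω) :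
    (∑ x : X,
        (univ.inf' univ_nonempty fun z : Z =>
            ce P Yv fun ω => Zv ω = z ∧ Xv ω = x ∧ Av ω = a) *
          cpr P (fun ω => Xv ω = x) (fun ω => Av ω = !a)) ≤
      ce P Ya (fun ω => Av ω = !a) ∧
    ce P Ya (fun ω => Av ω = !a) ≤
      ∑ x : X,
        (univ.sup' univ_nonempty fun z : Z =>
            ce P Yv fun ω => Zv ω = z ∧ Xv ω = x ∧ Av ω = a) *
          cpr P (fun ω => Xv ω = x) (fun ω => Av ω = !a) := by
  by_cases hΩ : Nonempty Ω
  swap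
  · haveI : IsEmpty Ω := not_nonempty_iff.mp hΩ
    have hpr0 : ∀ E : Ω → Prop, pr P E = 0 := fun E => by simp [pr]
    have hce0 : ce P Ya (fun ω => Av ω = !a) = 0 := by
      unfold ce; rw [hpr0]; simp
    have hcpr0 : ∀ x : X, cpr P (fun ω => Xv ω = x) (fun ω => Av ω = !a) = 0 := fun x => by
      unfold cpr; rw [hpr0, hpr0]; simp
    rw [hce0]
    constructor
    · simp [hcpr0]
    · simp [hcpr0]
  · obtain ⟨ω₀⟩ := hΩ
    haveI : Nonempty U := ⟨Uv ω₀⟩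
    haveI : Nonempty X := ⟨Xv ω₀⟩
    -- positivity facts
    have hprF : ∀ (a' : Bool) (x : X), 0 < pr P (fun ω => Av ω = a' ∧ Xv ω = x) := fun a' x =>
      lt_of_lt_of_le (hpos a' x (Classical.arbitrary U)) (pr_mono P hP fun ω h => ⟨h.1, h.2.1⟩)
    have hprA : 0 < pr P (fun ω => Av ω = !a) :=
      lt_of_lt_of_le (hprF (!a) (Classical.arbitrary X)) (pr_mono P hP fun ω h => h.1)
    have hprXU : ∀ (x : X) (u : U), 0 < pr P (fun ω => Xv ω = x ∧ Uv ω = u) := fun x u =>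
      lt_of_lt_of_le (hpos a x u) (pr_mono P hP fun ω h => ⟨h.2.1, h.2.2⟩)
    have hprG : ∀ (z : Z) (x : X), 0 < pr P (fun ω => Zv ω = z ∧ Xv ω = x ∧ Av ω = a) := by
      intro z x
      have h := hposZ z a x
      have e : pr P (fun ω => Zv ω = z ∧ Av ω = a ∧ Xv ω = x)
          = pr P (fun ω => Zv ω = z ∧ Xv ω = x ∧ Av ω = a) :=
        pr_congr P fun ω => ⟨fun h => ⟨h.1, h.2.2, h.2.1⟩, fun h => ⟨h.1, h.2.2, h.2.1⟩⟩
      exact e ▸ h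
    -- sum over u of ns over the cell (a', x, u)
    have hnsU : ∀ (f : Ω → ℝ) (a' : Bool) (x : X),
        (∑ u : U, ns P f (fun ω => Av ω = a' ∧ Xv ω = x ∧ Uv ω = u))
          = ns P f (fun ω => Av ω = a' ∧ Xv ω = x) := by
      intro f a' x
      calc (∑ u : U, ns P f (fun ω => Av ω = a' ∧ Xv ω = x ∧ Uv ω = u))
          = ∑ u : U, ns P f (fun ω => Uv ω = u ∧ Av ω = a' ∧ Xv ω = x) :=
            Finset.sum_congr rfl fun u _ => ns_congr P f fun ω =>
              ⟨fun h => ⟨h.2.2, h.1, h.2.1⟩, fun h => ⟨h.2.1, h.2.2, h.1⟩⟩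
        _ = ns P f (fun ω => Av ω = a' ∧ Xv ω = x) := (ns_partition P Uv f _).symm
    have hUsum : ∀ (a' : Bool) (x : X),
        (∑ u : U, pr P (fun ω => Av ω = a' ∧ Xv ω = x ∧ Uv ω = u))
          = pr P (fun ω => Av ω = a' ∧ Xv ω = x) := by
      intro a' x
      calc (∑ u : U, pr P (fun ω => Av ω = a' ∧ Xv ω = x ∧ Uv ω = u))
          = ∑ u : U, pr P (fun ω => Uv ω = u ∧ Av ω = a' ∧ Xv ω = x) :=
            Finset.sum_congr rfl fun u _ => pr_congr P fun ω =>
              ⟨fun h => ⟨h.2.2, h.1, h.2.1⟩, fun h => ⟨h.2.1, h.2.2, h.1⟩⟩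
        _ = pr P (fun ω => Av ω = a' ∧ Xv ω = x) := (pr_partition P Uv _).symm
    -- Step B+C : E[Ya | A=!a, x, u] = E[Y | A=a, x, u]
    have hBC : ∀ (x : X) (u : U),
        ce P Ya (fun ω => Av ω = !a ∧ Xv ω = x ∧ Uv ω = u)
          = ce P Yv (fun ω => Av ω = a ∧ Xv ω = x ∧ Uv ω = u) := by
      intro x u
      have h1 : ∀ a' : Bool, ce P Ya (fun ω => Av ω = a' ∧ Xv ω = x ∧ Uv ω = u)
          = ns P Ya (fun ω => Xv ω = x ∧ Uv ω = u) / pr P (fun ω => Xv ω = x ∧ Uv ω = u) := by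
        intro a'
        rw [ce_def, div_eq_div_iff (hpos a' x u).ne' (hprXU x u).ne']
        exact ns_mul_pr P Ya _ _ (fun y _ => hYaA y a' x u)
      have h2 : ce P Yv (fun ω => Av ω = a ∧ Xv ω = x ∧ Uv ω = u)
          = ce P Ya (fun ω => Av ω = a ∧ Xv ω = x ∧ Uv ω = u) := by
        rw [ce_def, ce_def]
        congr 1
        exact ns_congr_fun P fun ω h => hcons ω h.1
      rw [h1 (!a), h2, h1 a]
    -- bridge rearranged
    have hbr : ∀ (x : X) (u : U),
        pr P (fun ω => Av ω = !a ∧ Xv ω = x ∧ Uv ω = u) * pr P (fun ω => Av ω = a ∧ Xv ω = x)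
          = ce P (fun ω => q (Zv ω) a (Xv ω)) (fun ω => Av ω = a ∧ Xv ω = x ∧ Uv ω = u)
            * pr P (fun ω => Av ω = a ∧ Xv ω = x ∧ Uv ω = u)
            * pr P (fun ω => Av ω = !a ∧ Xv ω = x) := by
      intro x u
      have h := hbridgeq a x u
      have e1 : cpr P (fun ω => Uv ω = u) (fun ω => Av ω = !a ∧ Xv ω = x)
          = pr P (fun ω => Av ω = !a ∧ Xv ω = x ∧ Uv ω = u)
            / pr P (fun ω => Av ω = !a ∧ Xv ω = x) := by
        show pr P (fun ω => Uv ω = u ∧ Av ω = !a ∧ Xv ω = x) / _ = _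
        rw [pr_congr P (show ∀ ω : Ω, (Uv ω = u ∧ Av ω = !a ∧ Xv ω = x)
            ↔ (Av ω = !a ∧ Xv ω = x ∧ Uv ω = u) from fun ω =>
          ⟨fun h => ⟨h.2.1, h.2.2, h.1⟩, fun h => ⟨h.2.2, h.1, h.2.1⟩⟩)]
      have e2 : cpr P (fun ω => Uv ω = u) (fun ω => Av ω = a ∧ Xv ω = x)
          = pr P (fun ω => Av ω = a ∧ Xv ω = x ∧ Uv ω = u)
            / pr P (fun ω => Av ω = a ∧ Xv ω = x) := by
        show pr P (fun ω => Uv ω = u ∧ Av ω = a ∧ Xv ω = x) / _ = _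
        rw [pr_congr P (show ∀ ω : Ω, (Uv ω = u ∧ Av ω = a ∧ Xv ω = x)
            ↔ (Av ω = a ∧ Xv ω = x ∧ Uv ω = u) from fun ω =>
          ⟨fun h => ⟨h.2.1, h.2.2, h.1⟩, fun h => ⟨h.2.2, h.1, h.2.1⟩⟩)]
      rw [e1, e2] at h
      have n1 := (hprF (!a) x).ne'
      have n2 := (hprF a x).ne'
      have n3 := (hpos a x u).ne'
      rw [h]
      field_simp
    -- factorization E[qY | a,x,u] * P = E[q|a,x,u] E[Y|a,x,u]
    have hfact : ∀ (x : X) (u : U),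
        ns P (fun ω => q (Zv ω) a (Xv ω) * Yv ω) (fun ω => Av ω = a ∧ Xv ω = x ∧ Uv ω = u)
            * pr P (fun ω => Av ω = a ∧ Xv ω = x ∧ Uv ω = u)
          = ns P (fun ω => q (Zv ω) a (Xv ω)) (fun ω => Av ω = a ∧ Xv ω = x ∧ Uv ω = u)
            * ns P Yv (fun ω => Av ω = a ∧ Xv ω = x ∧ Uv ω = u) := by
      intro x u
      have hsub : ∀ z : Z,
          ns P Yv (fun ω => Zv ω = z ∧ Av ω = a ∧ Xv ω = x ∧ Uv ω = u)
              * pr P (fun ω => Av ω = a ∧ Xv ω = x ∧ Uv ω = u)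
            = pr P (fun ω => Zv ω = z ∧ Av ω = a ∧ Xv ω = x ∧ Uv ω = u)
              * ns P Yv (fun ω => Av ω = a ∧ Xv ω = x ∧ Uv ω = u) := fun z =>
        ns_mul_pr' P Yv (fun ω => Zv ω = z) (fun ω => Av ω = a ∧ Xv ω = x ∧ Uv ω = u)
          (fun y _ => hZY z y a x u)
      have hA : ns P (fun ω => q (Zv ω) a (Xv ω) * Yv ω) (fun ω => Av ω = a ∧ Xv ω = x ∧ Uv ω = u)
          = ∑ z : Z, q z a x * ns P Yv (fun ω => Zv ω = z ∧ Av ω = a ∧ Xv ω = x ∧ Uv ω = u) :=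
        calc ns P (fun ω => q (Zv ω) a (Xv ω) * Yv ω) (fun ω => Av ω = a ∧ Xv ω = x ∧ Uv ω = u)
            = ∑ z : Z, ns P (fun ω => q (Zv ω) a (Xv ω) * Yv ω)
                (fun ω => Zv ω = z ∧ Av ω = a ∧ Xv ω = x ∧ Uv ω = u) := ns_partition P Zv _ _
          _ = ∑ z : Z, q z a x * ns P Yv (fun ω => Zv ω = z ∧ Av ω = a ∧ Xv ω = x ∧ Uv ω = u) := by
              refine Finset.sum_congr rfl fun z _ => ?_
              calc ns P (fun ω => q (Zv ω) a (Xv ω) * Yv ω)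
                    (fun ω => Zv ω = z ∧ Av ω = a ∧ Xv ω = x ∧ Uv ω = u)
                  = ns P (fun ω => q z a x * Yv ω)
                    (fun ω => Zv ω = z ∧ Av ω = a ∧ Xv ω = x ∧ Uv ω = u) :=
                    ns_congr_fun P fun ω h => by rw [h.1, h.2.2.1]
                _ = q z a x * ns P Yv (fun ω => Zv ω = z ∧ Av ω = a ∧ Xv ω = x ∧ Uv ω = u) :=
                    ns_smul P _ Yv _
      have hB : ns P (fun ω => q (Zv ω) a (Xv ω)) (fun ω => Av ω = a ∧ Xv ω = x ∧ Uv ω = u)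
          = ∑ z : Z, q z a x * pr P (fun ω => Zv ω = z ∧ Av ω = a ∧ Xv ω = x ∧ Uv ω = u) :=
        calc ns P (fun ω => q (Zv ω) a (Xv ω)) (fun ω => Av ω = a ∧ Xv ω = x ∧ Uv ω = u)
            = ∑ z : Z, ns P (fun ω => q (Zv ω) a (Xv ω))
                (fun ω => Zv ω = z ∧ Av ω = a ∧ Xv ω = x ∧ Uv ω = u) := ns_partition P Zv _ _
          _ = ∑ z : Z, q z a x * pr P (fun ω => Zv ω = z ∧ Av ω = a ∧ Xv ω = x ∧ Uv ω = u) := by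
              refine Finset.sum_congr rfl fun z _ => ?_
              calc ns P (fun ω => q (Zv ω) a (Xv ω))
                    (fun ω => Zv ω = z ∧ Av ω = a ∧ Xv ω = x ∧ Uv ω = u)
                  = ns P (fun _ => q z a x)
                    (fun ω => Zv ω = z ∧ Av ω = a ∧ Xv ω = x ∧ Uv ω = u) :=
                    ns_congr_fun P fun ω h => by rw [h.1, h.2.2.1]
                _ = q z a x * pr P (fun ω => Zv ω = z ∧ Av ω = a ∧ Xv ω = x ∧ Uv ω = u) :=
                    ns_const P _ _
      rw [hA, hB, Finset.sum_mul, Finset.sum_mul]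
      refine Finset.sum_congr rfl fun z _ => ?_
      rw [mul_assoc, hsub z]
      ring
    -- ns of qY over (a,x) expanded over z
    have hqY : ∀ x : X,
        ns P (fun ω => q (Zv ω) a (Xv ω) * Yv ω) (fun ω => Av ω = a ∧ Xv ω = x)
          = ∑ z : Z, q z a x *
              ((ce P Yv fun ω => Zv ω = z ∧ Xv ω = x ∧ Av ω = a)
                * pr P (fun ω => Zv ω = z ∧ Xv ω = x ∧ Av ω = a)) := by
      intro x
      calc ns P (fun ω => q (Zv ω) a (Xv ω) * Yv ω) (fun ω => Av ω = a ∧ Xv ω = x)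
          = ∑ z : Z, ns P (fun ω => q (Zv ω) a (Xv ω) * Yv ω)
              (fun ω => Zv ω = z ∧ Av ω = a ∧ Xv ω = x) := ns_partition P Zv _ _
        _ = ∑ z : Z, q z a x *
              ((ce P Yv fun ω => Zv ω = z ∧ Xv ω = x ∧ Av ω = a)
                * pr P (fun ω => Zv ω = z ∧ Xv ω = x ∧ Av ω = a)) := by
            refine Finset.sum_congr rfl fun z _ => ?_
            calc ns P (fun ω => q (Zv ω) a (Xv ω) * Yv ω)
                  (fun ω => Zv ω = z ∧ Av ω = a ∧ Xv ω = x)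
                = ns P (fun ω => q z a x * Yv ω) (fun ω => Zv ω = z ∧ Av ω = a ∧ Xv ω = x) :=
                  ns_congr_fun P fun ω h => by rw [h.1, h.2.2]
              _ = q z a x * ns P Yv (fun ω => Zv ω = z ∧ Av ω = a ∧ Xv ω = x) := ns_smul P _ Yv _
              _ = q z a x * ns P Yv (fun ω => Zv ω = z ∧ Xv ω = x ∧ Av ω = a) := by
                  rw [ns_congr P Yv (show ∀ ω : Ω, (Zv ω = z ∧ Av ω = a ∧ Xv ω = x)
                      ↔ (Zv ω = z ∧ Xv ω = x ∧ Av ω = a) from fun ω =>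
                    ⟨fun h => ⟨h.1, h.2.2, h.2.1⟩, fun h => ⟨h.1, h.2.2, h.2.1⟩⟩)]
              _ = q z a x *
                  ((ce P Yv fun ω => Zv ω = z ∧ Xv ω = x ∧ Av ω = a)
                    * pr P (fun ω => Zv ω = z ∧ Xv ω = x ∧ Av ω = a)) := by
                  rw [ce_def, div_mul_cancel₀ _ (hprG z x).ne']
    -- the weights sum to P(a,x)
    have hqsum : ∀ x : X,
        (∑ z : Z, q z a x * pr P (fun ω => Zv ω = z ∧ Xv ω = x ∧ Av ω = a))
          = pr P (fun ω => Av ω = a ∧ Xv ω = x) := by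
      intro x
      have h1 : ns P (fun ω => q (Zv ω) a (Xv ω)) (fun ω => Av ω = a ∧ Xv ω = x)
          = ∑ z : Z, q z a x * pr P (fun ω => Zv ω = z ∧ Xv ω = x ∧ Av ω = a) :=
        calc ns P (fun ω => q (Zv ω) a (Xv ω)) (fun ω => Av ω = a ∧ Xv ω = x)
            = ∑ z : Z, ns P (fun ω => q (Zv ω) a (Xv ω))
                (fun ω => Zv ω = z ∧ Av ω = a ∧ Xv ω = x) := ns_partition P Zv _ _
          _ = ∑ z : Z, q z a x * pr P (fun ω => Zv ω = z ∧ Xv ω = x ∧ Av ω = a) := by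
              refine Finset.sum_congr rfl fun z _ => ?_
              calc ns P (fun ω => q (Zv ω) a (Xv ω)) (fun ω => Zv ω = z ∧ Av ω = a ∧ Xv ω = x)
                  = ns P (fun _ => q z a x) (fun ω => Zv ω = z ∧ Av ω = a ∧ Xv ω = x) :=
                    ns_congr_fun P fun ω h => by rw [h.1, h.2.2]
                _ = q z a x * pr P (fun ω => Zv ω = z ∧ Av ω = a ∧ Xv ω = x) := ns_const P _ _
                _ = q z a x * pr P (fun ω => Zv ω = z ∧ Xv ω = x ∧ Av ω = a) := by
                    rw [pr_congr P (show ∀ ω : Ω, (Zv ω = z ∧ Av ω = a ∧ Xv ω = x)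
                        ↔ (Zv ω = z ∧ Xv ω = x ∧ Av ω = a) from fun ω =>
                      ⟨fun h => ⟨h.1, h.2.2, h.2.1⟩, fun h => ⟨h.1, h.2.2, h.2.1⟩⟩)]
      have h2 : ns P (fun ω => q (Zv ω) a (Xv ω)) (fun ω => Av ω = a ∧ Xv ω = x)
          = ∑ u : U, ce P (fun ω => q (Zv ω) a (Xv ω)) (fun ω => Av ω = a ∧ Xv ω = x ∧ Uv ω = u)
              * pr P (fun ω => Av ω = a ∧ Xv ω = x ∧ Uv ω = u) := by
        rw [← hnsU (fun ω => q (Zv ω) a (Xv ω)) a x]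
        refine Finset.sum_congr rfl fun u _ => ?_
        rw [ce_def, div_mul_cancel₀ _ (hpos a x u).ne']
      have h4 : (∑ u : U, ce P (fun ω => q (Zv ω) a (Xv ω))
              (fun ω => Av ω = a ∧ Xv ω = x ∧ Uv ω = u)
              * pr P (fun ω => Av ω = a ∧ Xv ω = x ∧ Uv ω = u))
            * pr P (fun ω => Av ω = !a ∧ Xv ω = x)
          = pr P (fun ω => Av ω = a ∧ Xv ω = x) * pr P (fun ω => Av ω = !a ∧ Xv ω = x) := by
        rw [Finset.sum_mul]
        calc (∑ u : U, ce P (fun ω => q (Zv ω) a (Xv ω))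
                (fun ω => Av ω = a ∧ Xv ω = x ∧ Uv ω = u)
                * pr P (fun ω => Av ω = a ∧ Xv ω = x ∧ Uv ω = u)
                * pr P (fun ω => Av ω = !a ∧ Xv ω = x))
            = ∑ u : U, pr P (fun ω => Av ω = !a ∧ Xv ω = x ∧ Uv ω = u)
                * pr P (fun ω => Av ω = a ∧ Xv ω = x) :=
              Finset.sum_congr rfl fun u _ => (hbr x u).symm
          _ = (∑ u : U, pr P (fun ω => Av ω = !a ∧ Xv ω = x ∧ Uv ω = u))
                * pr P (fun ω => Av ω = a ∧ Xv ω = x) := by rw [Finset.sum_mul]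
          _ = pr P (fun ω => Av ω = !a ∧ Xv ω = x) * pr P (fun ω => Av ω = a ∧ Xv ω = x) := by
              rw [hUsum (!a) x]
          _ = pr P (fun ω => Av ω = a ∧ Xv ω = x) * pr P (fun ω => Av ω = !a ∧ Xv ω = x) :=
              mul_comm _ _
      have h5 := mul_right_cancel₀ (hprF (!a) x).ne' h4
      rw [← h1, h2]
      exact h5
    -- the main per-x identity
    have hTx : ∀ x : X,
        (∑ u : U, ce P Yv (fun ω => Av ω = a ∧ Xv ω = x ∧ Uv ω = u)
            * pr P (fun ω => Av ω = !a ∧ Xv ω = x ∧ Uv ω = u))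
          * pr P (fun ω => Av ω = a ∧ Xv ω = x)
        = pr P (fun ω => Av ω = !a ∧ Xv ω = x)
          * ∑ z : Z, q z a x *
              ((ce P Yv fun ω => Zv ω = z ∧ Xv ω = x ∧ Av ω = a)
                * pr P (fun ω => Zv ω = z ∧ Xv ω = x ∧ Av ω = a)) := by
      intro x
      have hstep : ∀ u : U,
          ce P Yv (fun ω => Av ω = a ∧ Xv ω = x ∧ Uv ω = u)
              * pr P (fun ω => Av ω = !a ∧ Xv ω = x ∧ Uv ω = u)
              * pr P (fun ω => Av ω = a ∧ Xv ω = x)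
            = pr P (fun ω => Av ω = !a ∧ Xv ω = x)
              * ns P (fun ω => q (Zv ω) a (Xv ω) * Yv ω)
                  (fun ω => Av ω = a ∧ Xv ω = x ∧ Uv ω = u) := by
        intro u
        have hu : ce P (fun ω => q (Zv ω) a (Xv ω)) (fun ω => Av ω = a ∧ Xv ω = x ∧ Uv ω = u)
            * ce P Yv (fun ω => Av ω = a ∧ Xv ω = x ∧ Uv ω = u)
            * pr P (fun ω => Av ω = a ∧ Xv ω = x ∧ Uv ω = u)
            = ns P (fun ω => q (Zv ω) a (Xv ω) * Yv ω)
                (fun ω => Av ω = a ∧ Xv ω = x ∧ Uv ω = u) := by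
          have h := hfact x u
          have hp := (hpos a x u).ne'
          rw [ce_def, ce_def]
          field_simp
          linear_combination (-1 : ℝ) * h
        rw [mul_assoc, hbr x u]
        linear_combination pr P (fun ω => Av ω = !a ∧ Xv ω = x) * hu
      calc (∑ u : U, ce P Yv (fun ω => Av ω = a ∧ Xv ω = x ∧ Uv ω = u)
              * pr P (fun ω => Av ω = !a ∧ Xv ω = x ∧ Uv ω = u))
            * pr P (fun ω => Av ω = a ∧ Xv ω = x)
          = ∑ u : U, ce P Yv (fun ω => Av ω = a ∧ Xv ω = x ∧ Uv ω = u)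
              * pr P (fun ω => Av ω = !a ∧ Xv ω = x ∧ Uv ω = u)
              * pr P (fun ω => Av ω = a ∧ Xv ω = x) := by rw [Finset.sum_mul]
        _ = ∑ u : U, pr P (fun ω => Av ω = !a ∧ Xv ω = x)
              * ns P (fun ω => q (Zv ω) a (Xv ω) * Yv ω)
                  (fun ω => Av ω = a ∧ Xv ω = x ∧ Uv ω = u) :=
            Finset.sum_congr rfl fun u _ => hstep u
        _ = pr P (fun ω => Av ω = !a ∧ Xv ω = x)
              * ∑ u : U, ns P (fun ω => q (Zv ω) a (Xv ω) * Yv ω)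
                  (fun ω => Av ω = a ∧ Xv ω = x ∧ Uv ω = u) := by rw [Finset.mul_sum]
        _ = pr P (fun ω => Av ω = !a ∧ Xv ω = x)
              * ns P (fun ω => q (Zv ω) a (Xv ω) * Yv ω) (fun ω => Av ω = a ∧ Xv ω = x) := by
            rw [hnsU (fun ω => q (Zv ω) a (Xv ω) * Yv ω) a x]
        _ = pr P (fun ω => Av ω = !a ∧ Xv ω = x)
              * ∑ z : Z, q z a x *
                  ((ce P Yv fun ω => Zv ω = z ∧ Xv ω = x ∧ Av ω = a)
                    * pr P (fun ω => Zv ω = z ∧ Xv ω = x ∧ Av ω = a)) := by rw [hqY x]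
    -- main decomposition of E[Ya | A = !a]
    have hmain : ce P Ya (fun ω => Av ω = !a)
        = (∑ x : X, ∑ u : U,
            ce P Yv (fun ω => Av ω = a ∧ Xv ω = x ∧ Uv ω = u)
              * pr P (fun ω => Av ω = !a ∧ Xv ω = x ∧ Uv ω = u))
          / pr P (fun ω => Av ω = !a) := by
      rw [ce_def]
      congr 1
      calc ns P Ya (fun ω => Av ω = !a)
          = ∑ x : X, ns P Ya (fun ω => Xv ω = x ∧ Av ω = !a) := ns_partition P Xv Ya _
        _ = ∑ x : X, ∑ u : U, ns P Ya (fun ω => Av ω = !a ∧ Xv ω = x ∧ Uv ω = u) := by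
            refine Finset.sum_congr rfl fun x _ => ?_
            calc ns P Ya (fun ω => Xv ω = x ∧ Av ω = !a)
                = ns P Ya (fun ω => Av ω = !a ∧ Xv ω = x) :=
                  ns_congr P Ya fun ω => ⟨fun h => ⟨h.2, h.1⟩, fun h => ⟨h.2, h.1⟩⟩
              _ = ∑ u : U, ns P Ya (fun ω => Av ω = !a ∧ Xv ω = x ∧ Uv ω = u) :=
                  (hnsU Ya (!a) x).symm
        _ = ∑ x : X, ∑ u : U, ce P Yv (fun ω => Av ω = a ∧ Xv ω = x ∧ Uv ω = u)
              * pr P (fun ω => Av ω = !a ∧ Xv ω = x ∧ Uv ω = u) := by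
            refine Finset.sum_congr rfl fun x _ => Finset.sum_congr rfl fun u _ => ?_
            rw [← hBC x u, ce_def, div_mul_cancel₀ _ (hpos (!a) x u).ne']
    -- cpr rewritten
    have hcpr_eq : ∀ x : X, cpr P (fun ω => Xv ω = x) (fun ω => Av ω = !a)
        = pr P (fun ω => Av ω = !a ∧ Xv ω = x) / pr P (fun ω => Av ω = !a) := by
      intro x
      show pr P (fun ω => Xv ω = x ∧ Av ω = !a) / pr P (fun ω => Av ω = !a) = _
      rw [pr_congr P (show ∀ ω : Ω, (Xv ω = x ∧ Av ω = !a) ↔ (Av ω = !a ∧ Xv ω = x)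
        from fun ω => ⟨fun h => ⟨h.2, h.1⟩, fun h => ⟨h.2, h.1⟩⟩)]
    -- the two per-x bounds
    have hlow : ∀ x : X,
        (univ.inf' univ_nonempty fun z : Z =>
            ce P Yv fun ω => Zv ω = z ∧ Xv ω = x ∧ Av ω = a)
            * pr P (fun ω => Av ω = !a ∧ Xv ω = x)
          ≤ ∑ u : U, ce P Yv (fun ω => Av ω = a ∧ Xv ω = x ∧ Uv ω = u)
              * pr P (fun ω => Av ω = !a ∧ Xv ω = x ∧ Uv ω = u) := by
      intro x
      set m := univ.inf' univ_nonempty fun z : Z =>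
        ce P Yv fun ω => Zv ω = z ∧ Xv ω = x ∧ Av ω = a with hm
      have h1 : m * pr P (fun ω => Av ω = a ∧ Xv ω = x)
          = ∑ z : Z, q z a x * (m * pr P (fun ω => Zv ω = z ∧ Xv ω = x ∧ Av ω = a)) := by
        rw [← hqsum x, Finset.mul_sum]
        exact Finset.sum_congr rfl fun z _ => by ring
      have h2 : (∑ z : Z, q z a x * (m * pr P (fun ω => Zv ω = z ∧ Xv ω = x ∧ Av ω = a)))
          ≤ ∑ z : Z, q z a x *
              ((ce P Yv fun ω => Zv ω = z ∧ Xv ω = x ∧ Av ω = a)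
                * pr P (fun ω => Zv ω = z ∧ Xv ω = x ∧ Av ω = a)) := by
        refine Finset.sum_le_sum fun z _ => ?_
        refine mul_le_mul_of_nonneg_left ?_ (hq z a x)
        refine mul_le_mul_of_nonneg_right ?_ (hprG z x).le
        rw [hm]
        exact Finset.inf'_le
          (fun z : Z => ce P Yv fun ω => Zv ω = z ∧ Xv ω = x ∧ Av ω = a) (Finset.mem_univ z)
      have h3 : m * pr P (fun ω => Av ω = !a ∧ Xv ω = x) * pr P (fun ω => Av ω = a ∧ Xv ω = x)
          ≤ (∑ u : U, ce P Yv (fun ω => Av ω = a ∧ Xv ω = x ∧ Uv ω = u)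
              * pr P (fun ω => Av ω = !a ∧ Xv ω = x ∧ Uv ω = u))
            * pr P (fun ω => Av ω = a ∧ Xv ω = x) := by
        rw [hTx x]
        calc m * pr P (fun ω => Av ω = !a ∧ Xv ω = x) * pr P (fun ω => Av ω = a ∧ Xv ω = x)
            = pr P (fun ω => Av ω = !a ∧ Xv ω = x)
              * (m * pr P (fun ω => Av ω = a ∧ Xv ω = x)) := by ring
          _ = pr P (fun ω => Av ω = !a ∧ Xv ω = x)
              * ∑ z : Z, q z a x * (m * pr P (fun ω => Zv ω = z ∧ Xv ω = x ∧ Av ω = a)) := by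
              rw [h1]
          _ ≤ pr P (fun ω => Av ω = !a ∧ Xv ω = x)
              * ∑ z : Z, q z a x *
                  ((ce P Yv fun ω => Zv ω = z ∧ Xv ω = x ∧ Av ω = a)
                    * pr P (fun ω => Zv ω = z ∧ Xv ω = x ∧ Av ω = a)) :=
              mul_le_mul_of_nonneg_left h2 (pr_nonneg P hP _)
      exact le_of_mul_le_mul_right h3 (hprF a x)
    have hup : ∀ x : X,
        (∑ u : U, ce P Yv (fun ω => Av ω = a ∧ Xv ω = x ∧ Uv ω = u)
            * pr P (fun ω => Av ω = !a ∧ Xv ω = x ∧ Uv ω = u))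
          ≤ (univ.sup' univ_nonempty fun z : Z =>
              ce P Yv fun ω => Zv ω = z ∧ Xv ω = x ∧ Av ω = a)
            * pr P (fun ω => Av ω = !a ∧ Xv ω = x) := by
      intro x
      set m := univ.sup' univ_nonempty fun z : Z =>
        ce P Yv fun ω => Zv ω = z ∧ Xv ω = x ∧ Av ω = a with hm
      have h1 : m * pr P (fun ω => Av ω = a ∧ Xv ω = x)
          = ∑ z : Z, q z a x * (m * pr P (fun ω => Zv ω = z ∧ Xv ω = x ∧ Av ω = a)) := by
        rw [← hqsum x, Finset.mul_sum]
        exact Finset.sum_congr rfl fun z _ => by ring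
      have h2 : (∑ z : Z, q z a x *
              ((ce P Yv fun ω => Zv ω = z ∧ Xv ω = x ∧ Av ω = a)
                * pr P (fun ω => Zv ω = z ∧ Xv ω = x ∧ Av ω = a)))
          ≤ ∑ z : Z, q z a x * (m * pr P (fun ω => Zv ω = z ∧ Xv ω = x ∧ Av ω = a)) := by
        refine Finset.sum_le_sum fun z _ => ?_
        refine mul_le_mul_of_nonneg_left ?_ (hq z a x)
        refine mul_le_mul_of_nonneg_right ?_ (hprG z x).le
        rw [hm]
        exact Finset.le_sup'
          (fun z : Z => ce P Yv fun ω => Zv ω = z ∧ Xv ω = x ∧ Av ω = a) (Finset.mem_univ z)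
      have h3 : (∑ u : U, ce P Yv (fun ω => Av ω = a ∧ Xv ω = x ∧ Uv ω = u)
              * pr P (fun ω => Av ω = !a ∧ Xv ω = x ∧ Uv ω = u))
            * pr P (fun ω => Av ω = a ∧ Xv ω = x)
          ≤ m * pr P (fun ω => Av ω = !a ∧ Xv ω = x) * pr P (fun ω => Av ω = a ∧ Xv ω = x) := by
        rw [hTx x]
        calc pr P (fun ω => Av ω = !a ∧ Xv ω = x)
              * ∑ z : Z, q z a x *
                  ((ce P Yv fun ω => Zv ω = z ∧ Xv ω = x ∧ Av ω = a)
                    * pr P (fun ω => Zv ω = z ∧ Xv ω = x ∧ Av ω = a))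
            ≤ pr P (fun ω => Av ω = !a ∧ Xv ω = x)
              * ∑ z : Z, q z a x * (m * pr P (fun ω => Zv ω = z ∧ Xv ω = x ∧ Av ω = a)) :=
              mul_le_mul_of_nonneg_left h2 (pr_nonneg P hP _)
          _ = pr P (fun ω => Av ω = !a ∧ Xv ω = x)
              * (m * pr P (fun ω => Av ω = a ∧ Xv ω = x)) := by rw [h1]
          _ = m * pr P (fun ω => Av ω = !a ∧ Xv ω = x)
              * pr P (fun ω => Av ω = a ∧ Xv ω = x) := by ring
      exact le_of_mul_le_mul_right h3 (hprF a x)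
    constructor
    · rw [hmain, le_div_iff₀ hprA, Finset.sum_mul]
      refine Finset.sum_le_sum fun x _ => ?_
      rw [mul_assoc, hcpr_eq x, div_mul_cancel₀ _ hprA.ne']
      exact hlow x
    · rw [hmain, div_le_iff₀ hprA, Finset.sum_mul]
      refine Finset.sum_le_sum fun x _ => ?_
      rw [mul_assoc, hcpr_eq x, div_mul_cancel₀ _ hprA.ne']
      exact hup x
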